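/- arXiv:2204.12445 — 4 statements merged into one kernel-verified Lean document; each statement's English description precedes it below -/
import Mathlib

section
/- Let V be a finite-dimensional real Hilbert space, W ⊂ V an m-dimensional subspace spanned by orthonormal vectors w₁,…,w_m, and V_n ⊂ V an n-dimensional subspace with n ≤ m. If the stability constant β(V_n, W) := inf_{v ∈ V_n, v ≠ 0} ‖Π_W v‖ / ‖v‖ is strictly positive, then for any data vector l ∈ ℝ^m the constrained minimization problem: minimize ‖Π_{V_n^⊥} u‖² over u ∈ V subject to ⟨w_i, u⟩ = l_i for i = 1,…,m, has a unique solution. -/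
open InnerProductSpace

lemma pbdw_mem_orthogonal_span_range_iff {V : Type*} [NormedAddCommGroup V]
    [InnerProductSpace ℝ V] {m : ℕ} (w : Fin m → V) (x : V) :
    x ∈ (Submodule.span ℝ (Set.range w))ᗮ ↔ ∀ i, ⟪w i, x⟫_ℝ = 0 := by
  rw [Submodule.mem_orthogonal]
  constructor
  · intro h i; exact h _ (Submodule.subset_span ⟨i, rfl⟩)
  · intro h u hu
    induction hu using Submodule.span_induction with
    | mem y hy => obtain ⟨i, rfl⟩ := hy; exact h i
    | zero => simp
    | add a b _ _ ha hb => rw [inner_add_left, ha, hb]; ring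
    | smul c a _ ha => rw [inner_smul_left, ha]; simp

/-- PBDW minimization problem: existence and uniqueness of the solution. -/
theorem pbdw_unique_solution
    {V : Type*} [NormedAddCommGroup V] [InnerProductSpace ℝ V] [FiniteDimensional ℝ V]
    {m n : ℕ} (w : Fin m → V) (hw : Orthonormal ℝ w)
    (W : Submodule ℝ V) (hW : W = Submodule.span ℝ (Set.range w))
    (Vn : Submodule ℝ V) (hVn : Module.finrank ℝ Vn = n) (hnm : n ≤ m)
    (hβ : ∃ β : ℝ, 0 < β ∧ ∀ v ∈ Vn, β * ‖v‖ ≤ ‖(W.orthogonalProjectionOnto v : V)‖)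
    (l : Fin m → ℝ) :
    ∃! u : V,
      (∀ i, ⟪w i, u⟫_ℝ = l i) ∧
      ∀ u' : V, (∀ i, ⟪w i, u'⟫_ℝ = l i) →
        ‖(Vnᗮ.orthogonalProjectionOnto u : V)‖ ^ 2 ≤ ‖(Vnᗮ.orthogonalProjectionOnto u' : V)‖ ^ 2 := by
  obtain ⟨β, hβ0, hβle⟩ := hβ
  set u₀ : V := ∑ i, l i • w i with hu₀
  have hWl : ∀ i, ⟪w i, u₀⟫_ℝ = l i := by
    intro i
    simp [hu₀, inner_sum, inner_smul_right, orthonormal_iff_ite.mp hw]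
  -- constraint ↔ membership in Wᗮ
  have hconstr : ∀ u : V, (∀ i, ⟪w i, u⟫_ℝ = l i) ↔ u - u₀ ∈ Wᗮ := by
    intro u
    rw [hW, pbdw_mem_orthogonal_span_range_iff]
    constructor
    · intro h i; rw [inner_sub_right, h i, hWl]; ring
    · intro h i; have := h i; rw [inner_sub_right, hWl] at this; linarith
  set K : Submodule ℝ V := Vn ⊔ Wᗮ with hK
  have hVnK : Vn ≤ K := le_sup_left
  have hWK : Wᗮ ≤ K := le_sup_right
  have hKVn : Kᗮ ≤ Vnᗮ := Submodule.orthogonal_le hVnK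
  set p : V := (K.orthogonalProjectionOnto u₀ : V) with hp
  have hpK : p ∈ K := (K.orthogonalProjectionOnto u₀).2
  obtain ⟨v, hv, x, hx, hvx⟩ := Submodule.mem_sup.mp hpK
  set e : V := u₀ - p with he
  have heK : e ∈ Kᗮ := Submodule.sub_starProjection_mem_orthogonal (K := K) u₀
  have heVn : e ∈ Vnᗮ := hKVn heK
  set u : V := u₀ - x with hu
  have huc : ∀ i, ⟪w i, u⟫_ℝ = l i := by
    rw [hconstr]
    have : u - u₀ = -x := by rw [hu]; abel
    rw [this]
    exact neg_mem hx
  have hue : u = v + e := by rw [hu, he, ← hvx]; abel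
  have hPu : (Vnᗮ.orthogonalProjectionOnto u : V) = e := by
    rw [hue, map_add, Submodule.coe_add,
      Submodule.orthogonalProjectionOnto_apply_of_mem_orthogonal
        (Submodule.le_orthogonal_orthogonal Vn hv),
      (show (Vnᗮ.orthogonalProjectionOnto e : V) = e from Submodule.starProjection_eq_self_iff.mpr heVn)]
    simp
  -- inner product of e with anything in K vanishes
  have hinner : ∀ z ∈ K, ⟪e, z⟫_ℝ = 0 := fun z hz => by
    rw [real_inner_comm]
    exact (Submodule.mem_orthogonal K e).mp heK z hz
  -- minimality of u
  have hmin : ∀ u' : V, (∀ i, ⟪w i, u'⟫_ℝ = l i) →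
      ‖(Vnᗮ.orthogonalProjectionOnto u : V)‖ ^ 2 ≤ ‖(Vnᗮ.orthogonalProjectionOnto u' : V)‖ ^ 2 := by
    intro u' hu'
    have hd : u' - u ∈ Wᗮ := by
      have h1 : u' - u₀ ∈ Wᗮ := (hconstr u').mp hu'
      have h2 : u - u₀ ∈ Wᗮ := (hconstr u).mp huc
      have : u' - u = (u' - u₀) - (u - u₀) := by abel
      rw [this]; exact sub_mem h1 h2
    set d : V := u' - u with hdd
    have hPd : (Vnᗮ.orthogonalProjectionOnto d : V) = d - (Vn.orthogonalProjectionOnto d : V) := by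
      have : (Vn.orthogonalProjectionOnto d : V) + (Vnᗮ.orthogonalProjectionOnto d : V) = d := Vn.starProjection_add_starProjection_orthogonal d
      linear_combination (norm := module) this
    have hPdK : (Vnᗮ.orthogonalProjectionOnto d : V) ∈ K := by
      rw [hPd]
      exact sub_mem (hWK hd) (hVnK (Vn.orthogonalProjectionOnto d).2)
    have hsplit : (Vnᗮ.orthogonalProjectionOnto u' : V)
        = (Vnᗮ.orthogonalProjectionOnto u : V) + (Vnᗮ.orthogonalProjectionOnto d : V) := by
      have : u' = u + d := by rw [hdd]; abel
      rw [this, map_add]; rfl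
    have horth : ⟪(Vnᗮ.orthogonalProjectionOnto u : V), (Vnᗮ.orthogonalProjectionOnto d : V)⟫_ℝ = 0 := by
      rw [hPu]; exact hinner _ hPdK
    rw [hsplit, norm_add_sq_real, horth]
    have := sq_nonneg ‖(Vnᗮ.orthogonalProjectionOnto d : V)‖
    nlinarith
  refine ⟨u, ⟨huc, hmin⟩, ?_⟩
  rintro u' ⟨hu'c, hu'min⟩
  -- both are minimizers
  have h1 := hmin u' hu'c
  have h2 := hu'min u huc
  set a : V := (Vnᗮ.orthogonalProjectionOnto u : V)
  set b : V := (Vnᗮ.orthogonalProjectionOnto u' : V)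
  -- midpoint satisfies constraints
  have hmid : ∀ i, ⟪w i, (2⁻¹ : ℝ) • (u + u')⟫_ℝ = l i := by
    intro i
    rw [inner_smul_right, inner_add_right, huc i, hu'c i]
    ring
  have h3 := hu'min _ hmid
  have hPmid : (Vnᗮ.orthogonalProjectionOnto ((2⁻¹ : ℝ) • (u + u')) : V) = (2⁻¹ : ℝ) • (a + b) := by
    rw [map_smul, map_add]; rfl
  rw [hPmid] at h3
  have hnorm : ‖(2⁻¹ : ℝ) • (a + b)‖ = 2⁻¹ * ‖a + b‖ := by
    rw [norm_smul]; simp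
  rw [hnorm] at h3
  have hadd := norm_add_sq_real a b
  have hsub := norm_sub_sq_real a b
  have hba : b - a = (Vnᗮ.orthogonalProjectionOnto (u' - u) : V) := by
    rw [map_sub]; rfl
  rw [mul_pow] at h3
  norm_num at h3
  have hab0 : ‖b - a‖ = 0 := by
    have hrev : ‖b - a‖ = ‖a - b‖ := norm_sub_rev _ _
    have h4 : ‖a - b‖ ^ 2 ≤ 0 := by linarith
    have h5 : ‖a - b‖ ^ 2 = 0 := le_antisymm h4 (sq_nonneg _)
    rw [hrev]
    exact pow_eq_zero_iff two_ne_zero |>.mp h5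
  have hdVn : u' - u ∈ Vn := by
    have hP0 : (Vnᗮ.orthogonalProjectionOnto (u' - u) : V) = 0 := by
      rw [← hba]; exact norm_eq_zero.mp hab0
    have h6 : (Vn.orthogonalProjectionOnto (u' - u) : V) + (Vnᗮ.orthogonalProjectionOnto (u' - u) : V) = u' - u := Vn.starProjection_add_starProjection_orthogonal (u' - u)
    rw [hP0, add_zero] at h6
    rw [← h6]; exact (Vn.orthogonalProjectionOnto (u' - u)).2
  have hdW : u' - u ∈ Wᗮ := by
    have h1' : u' - u₀ ∈ Wᗮ := (hconstr u').mp hu'c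
    have h2' : u - u₀ ∈ Wᗮ := (hconstr u).mp huc
    have : u' - u = (u' - u₀) - (u - u₀) := by abel
    rw [this]; exact sub_mem h1' h2'
  have hPW : (W.orthogonalProjectionOnto (u' - u) : V) = 0 := by
    rw [Submodule.orthogonalProjectionOnto_apply_of_mem_orthogonal hdW]; rfl
  have := hβle _ hdVn
  rw [hPW, norm_zero] at this
  have : ‖u' - u‖ = 0 := by nlinarith [norm_nonneg (u' - u)]
  have := norm_eq_zero.mp this
  exact sub_eq_zero.mp this
end

section
/- Under the assumptions that β(V_n, W) > 0 and n ≤ m, the unique solution u* of the PBDW minimization problem (minimize ‖Π_{V_n^⊥} u‖² subject to ⟨w_i, u⟩ = l_i) admits an orthogonal decomposition u* = v* + η* with v* ∈ V_n and η* ∈ W ∩ V_n^⊥. In particular u* ∈ V_n ⊕ (W ∩ V_n^⊥). -/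
open InnerProductSpace

/-- The PBDW solution decomposes orthogonally as `u* = v* + η*` with
`v* ∈ Vₙ` and `η* ∈ W ⊓ Vₙᗮ`; in particular `u* ∈ Vₙ ⊔ (W ⊓ Vₙᗮ)`. -/
theorem pbdw_solution_decomposition
    {V : Type*} [NormedAddCommGroup V] [InnerProductSpace ℝ V] [FiniteDimensional ℝ V]
    {m n : ℕ} (w : Fin m → V) (hw : Orthonormal ℝ w)
    (W : Submodule ℝ V) (hW : W = Submodule.span ℝ (Set.range w))
    (Vn : Submodule ℝ V) (hVn : Module.finrank ℝ Vn = n) (hnm : n ≤ m)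
    (hβ : ∃ β : ℝ, 0 < β ∧ ∀ v ∈ Vn, β * ‖v‖ ≤ ‖(Submodule.orthogonalProjectionOnto W v : V)‖)
    (l : Fin m → ℝ) (ustar : V)
    (hconstr : ∀ i, ⟪w i, ustar⟫_ℝ = l i)
    (hmin : ∀ u' : V, (∀ i, ⟪w i, u'⟫_ℝ = l i) →
      ‖(Submodule.orthogonalProjectionOnto Vnᗮ ustar : V)‖ ^ 2 ≤ ‖(Submodule.orthogonalProjectionOnto Vnᗮ u' : V)‖ ^ 2) :
    (∃ vstar ∈ Vn, ∃ ηstar ∈ W ⊓ Vnᗮ, ustar = vstar + ηstar) ∧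
      ustar ∈ Vn ⊔ (W ⊓ Vnᗮ) := by
  set η : V := (Submodule.orthogonalProjectionOnto Vnᗮ ustar : V) with hη
  set v : V := (Submodule.orthogonalProjectionOnto Vn ustar : V) with hv
  have hdecomp : ustar = v + η := by
    rw [hv, hη]
    exact (Submodule.starProjection_add_starProjection_orthogonal (K := Vn) ustar).symm
  have hηVn : η ∈ Vnᗮ := (Submodule.orthogonalProjectionOnto Vnᗮ ustar).2
  -- show η ∈ W by showing it is orthogonal to Wᗮ
  have hηW : η ∈ W := by
    rw [← Submodule.orthogonal_orthogonal W]
    intro d hd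
    -- ⟪w i, d⟫ = 0
    have hwid : ∀ i, ⟪w i, d⟫_ℝ = 0 := by
      intro i
      have : w i ∈ W := by
        rw [hW]; exact Submodule.subset_span ⟨i, rfl⟩
      exact hd (w i) this
    set Pd : V := (Submodule.orthogonalProjectionOnto Vnᗮ d : V) with hPd
    have hinner : ⟪η, Pd⟫_ℝ = ⟪η, d⟫_ℝ := by
      have h1 : d - Pd ∈ Vnᗮᗮ := Submodule.sub_starProjection_mem_orthogonal (K := Vnᗮ) d
      have h2 : ⟪η, d - Pd⟫_ℝ = 0 := h1 η hηVn
      rw [inner_sub_right] at h2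
      linarith
    set c : ℝ := ⟪η, d⟫_ℝ with hc
    set s : ℝ := ‖Pd‖ ^ 2 with hs
    have hs0 : 0 ≤ s := by positivity
    have key : ∀ t : ℝ, 0 ≤ 2 * t * c + t ^ 2 * s := by
      intro t
      have hcon : ∀ i, ⟪w i, ustar + t • d⟫_ℝ = l i := by
        intro i
        rw [inner_add_right, inner_smul_right, hwid i, hconstr i]
        ring
      have := hmin (ustar + t • d) hcon
      have hproj : (Submodule.orthogonalProjectionOnto Vnᗮ (ustar + t • d) : V) = η + t • Pd := by
        rw [map_add, map_smul]; rfl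
      rw [hproj] at this
      have hnorm : ‖η + t • Pd‖ ^ 2 = ‖η‖ ^ 2 + 2 * t * c + t ^ 2 * s := by
        rw [norm_add_sq_real, real_inner_smul_right, norm_smul, hinner]
        simp [hs, hc, mul_pow]
        ring
      rw [hnorm] at this
      linarith
    have h1 := key (-c / (s + 1))
    have hs1 : (0:ℝ) < s + 1 := by linarith
    have : c = 0 := by
      have hexp : 2 * (-c / (s + 1)) * c + (-c / (s + 1)) ^ 2 * s
          = -(c ^ 2) * (s + 2) / (s + 1) ^ 2 := by
        field_simp
        ring
      rw [hexp] at h1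
      have h2 := (le_div_iff₀ (by positivity : (0:ℝ) < (s + 1) ^ 2)).mp h1
      nlinarith [sq_nonneg c]
    rw [real_inner_comm]
    exact this
  have hvVn : v ∈ Vn := (Submodule.orthogonalProjectionOnto Vn ustar).2
  have hηmem : η ∈ W ⊓ Vnᗮ := ⟨hηW, hηVn⟩
  refine ⟨⟨v, hvVn, η, hηmem, hdecomp⟩, ?_⟩
  rw [hdecomp]
  exact Submodule.add_mem_sup hvVn hηmem
end

section
/- Let u ∈ V and let A(w) = v* + η* be the PBDW reconstruction from the observations l_i = ⟨w_i, u⟩. Then the reconstruction error satisfies ‖u − A(w)‖ ≤ β(V_n, W)^{-1} · ‖u − Π_{V_n ⊕ (W ∩ V_n^⊥)} u‖. -/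
open InnerProductSpace

lemma sq_le_imp' {a b : ℝ} (hb : 0 ≤ b) (h : a^2 ≤ b^2) (ha : 0 ≤ a) : a ≤ b := by nlinarith

lemma pyth' {V : Type*} [NormedAddCommGroup V] [InnerProductSpace ℝ V] [FiniteDimensional ℝ V]
    (S : Submodule ℝ V) (x : V) :
    ‖x‖^2 = ‖(Submodule.orthogonalProjectionOnto S x : V)‖^2 + ‖x - Submodule.orthogonalProjectionOnto S x‖^2 := by
  have h0 : ⟪(Submodule.orthogonalProjectionOnto S x : V), x - Submodule.orthogonalProjectionOnto S x⟫_ℝ = 0 :=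
    Submodule.inner_right_of_mem_orthogonal (SetLike.coe_mem _)
      (Submodule.sub_starProjection_mem_orthogonal x)
  have hx : (Submodule.orthogonalProjectionOnto S x : V) + (x - Submodule.orthogonalProjectionOnto S x) = x := by abel
  have := norm_add_sq_real ((Submodule.orthogonalProjectionOnto S x : V)) (x - Submodule.orthogonalProjectionOnto S x)
  rw [hx, h0] at this
  linarith

lemma proj_norm_le' {V : Type*} [NormedAddCommGroup V] [InnerProductSpace ℝ V]
    [FiniteDimensional ℝ V] (S : Submodule ℝ V) (x : V) :
    ‖(Submodule.orthogonalProjectionOnto S x : V)‖ ≤ ‖x‖ := by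
  have h := pyth' S x
  nlinarith [norm_nonneg x, norm_nonneg ((Submodule.orthogonalProjectionOnto S x : V)),
    sq_nonneg (‖x - Submodule.orthogonalProjectionOnto S x‖)]

set_option maxHeartbeats 1000000 in
/-- PBDW a priori error bound:
`‖u − A(w)‖ ≤ β(Vₙ, W)⁻¹ ‖u − Π_{Vₙ ⊕ (W ∩ Vₙᗮ)} u‖`. -/
theorem pbdw_error_bound
    {V : Type*} [NormedAddCommGroup V] [InnerProductSpace ℝ V] [FiniteDimensional ℝ V]
    {m n : ℕ} (w : Fin m → V) (hw : Orthonormal ℝ w)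
    (W : Submodule ℝ V) (hW : W = Submodule.span ℝ (Set.range w))
    (Vn : Submodule ℝ V) (hVn : Module.finrank ℝ Vn = n) (hnm : n ≤ m)
    (β : ℝ)
    (hβ : β = sInf {r : ℝ | ∃ v ∈ Vn, v ≠ 0 ∧ r = ‖(Submodule.orthogonalProjectionOnto W v : V)‖ / ‖v‖})
    (hβpos : 0 < β)
    (u : V) (l : Fin m → ℝ) (hl : ∀ i, l i = ⟪w i, u⟫_ℝ)
    (ustar : V)
    (hconstr : ∀ i, ⟪w i, ustar⟫_ℝ = l i)
    (hmin : ∀ u' : V, (∀ i, ⟪w i, u'⟫_ℝ = l i) →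
      ‖(Submodule.orthogonalProjectionOnto Vnᗮ ustar : V)‖ ^ 2 ≤ ‖(Submodule.orthogonalProjectionOnto Vnᗮ u' : V)‖ ^ 2) :
    ‖u - ustar‖ ≤ β⁻¹ * ‖u - (Submodule.orthogonalProjectionOnto (Vn ⊔ (W ⊓ Vnᗮ)) u : V)‖ := by
  set K := Vn ⊔ (W ⊓ Vnᗮ) with hK
  set e := u - ustar with he
  have hwW : ∀ i, w i ∈ W := fun i => hW ▸ Submodule.subset_span (Set.mem_range_self i)
  -- e ∈ Wᗮ
  have heW : e ∈ Wᗮ := by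
    rw [Submodule.mem_orthogonal]
    intro x hx
    rw [hW] at hx
    induction hx using Submodule.span_induction with
    | mem x hx =>
      obtain ⟨i, rfl⟩ := hx
      rw [he, inner_sub_right, hconstr i, hl i, sub_self]
    | zero => simp
    | add x y _ _ hx hy => rw [inner_add_left, hx, hy, add_zero]
    | smul c x _ hx => rw [inner_smul_left, hx, mul_zero]
  -- Π_{Vnᗮ} ustar ∈ W
  have hPW : (Submodule.orthogonalProjectionOnto Vnᗮ ustar : V) ∈ W := by
    have key : ∀ h ∈ Wᗮ, ⟪(Submodule.orthogonalProjectionOnto Vnᗮ ustar : V), h⟫_ℝ = 0 := by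
      intro h hh
      set A := (Submodule.orthogonalProjectionOnto Vnᗮ ustar : V) with hA
      set B := (Submodule.orthogonalProjectionOnto Vnᗮ h : V) with hB
      set a := ⟪A, h⟫_ℝ with ha
      set c := ‖B‖^2 with hc
      have hAB : ⟪A, B⟫_ℝ = a := by
        have h1 : ⟪A, h - B⟫_ℝ = 0 :=
          Submodule.inner_right_of_mem_orthogonal (SetLike.coe_mem _)
            (Submodule.sub_starProjection_mem_orthogonal h)
        have h2 := inner_sub_right (𝕜 := ℝ) A h B
        rw [h1] at h2
        rw [ha]; linarith
      have cond : ∀ t : ℝ, 0 ≤ 2*t*a + t^2*c := by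
        intro t
        have hc' : ∀ i, ⟪w i, ustar + t • h⟫_ℝ = l i := by
          intro i
          rw [inner_add_right, inner_smul_right, hconstr i,
            Submodule.inner_right_of_mem_orthogonal (hwW i) hh, mul_zero, add_zero]
        have hm := hmin (ustar + t • h) hc'
        have hlin : ((Submodule.orthogonalProjectionOnto Vnᗮ (ustar + t • h) : V)) = A + t • B := by
          rw [map_add, map_smul]; push_cast; rfl
        rw [hlin] at hm
        have hns := norm_add_sq_real A (t • B)
        rw [real_inner_smul_right, hAB, norm_smul, Real.norm_eq_abs] at hns
        nlinarith [sq_abs t]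
      have hc0 : (0:ℝ) ≤ c := by positivity
      have hc1 : (0:ℝ) < c + 1 := by linarith
      set t₀ := -a/(c+1) with ht₀
      have hat : a = -(t₀ * (c+1)) := by rw [ht₀]; field_simp
      have H := cond t₀
      rw [hat] at H
      have ht0sq : t₀^2 ≤ 0 := by nlinarith [sq_nonneg t₀]
      have ht00 : t₀ = 0 := by
        have h1 := sq_nonneg t₀
        have h2 : t₀^2 = 0 := le_antisymm ht0sq h1
        exact (pow_eq_zero_iff two_ne_zero).mp h2
      rw [hat, ht00]; ring
    rw [← Submodule.orthogonal_orthogonal W, Submodule.mem_orthogonal]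
    intro x hx
    rw [real_inner_comm]
    exact key x hx
  -- ustar ∈ K
  have hustarK : ustar ∈ K := by
    have h1 : ustar - (Submodule.orthogonalProjectionOnto Vnᗮ ustar : V) ∈ Vn := by
      have h2 := Submodule.sub_starProjection_mem_orthogonal (K := Vnᗮ) ustar
      rwa [Submodule.orthogonal_orthogonal] at h2
    have h2 : (Submodule.orthogonalProjectionOnto Vnᗮ ustar : V) ∈ W ⊓ Vnᗮ :=
      Submodule.mem_inf.mpr ⟨hPW, SetLike.coe_mem _⟩
    have h3 : ustar = (ustar - (Submodule.orthogonalProjectionOnto Vnᗮ ustar : V)) +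
        (Submodule.orthogonalProjectionOnto Vnᗮ ustar : V) := by abel
    rw [h3]
    exact Submodule.add_mem K (Submodule.mem_sup_left h1) (Submodule.mem_sup_right h2)
  obtain ⟨v, hv, η, hη, hvη⟩ := Submodule.mem_sup.1 (SetLike.coe_mem (Submodule.orthogonalProjectionOnto K e))
  have hηW : η ∈ W := (Submodule.mem_inf.mp hη).1
  have hηVn : η ∈ Vnᗮ := (Submodule.mem_inf.mp hη).2
  have heK : e - (Submodule.orthogonalProjectionOnto K e : V) ∈ Kᗮ :=
    Submodule.sub_starProjection_mem_orthogonal e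
  -- η = 0, so Π_K e = v
  have heKv : (Submodule.orthogonalProjectionOnto K e : V) = v := by
    have h1 : ⟪η, e⟫_ℝ = 0 := Submodule.inner_right_of_mem_orthogonal hηW heW
    have h2 : ⟪η, e - (Submodule.orthogonalProjectionOnto K e : V)⟫_ℝ = 0 :=
      Submodule.inner_right_of_mem_orthogonal (Submodule.mem_sup_right hη) heK
    have h3 : ⟪η, v⟫_ℝ = 0 := by
      rw [real_inner_comm]
      exact Submodule.inner_right_of_mem_orthogonal hv hηVn
    have h5 : ⟪η, (Submodule.orthogonalProjectionOnto K e : V)⟫_ℝ = ‖η‖^2 := by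
      rw [← hvη, inner_add_right, h3, zero_add, real_inner_self_eq_norm_sq]
    have h6 := inner_sub_right (𝕜 := ℝ) η e (Submodule.orthogonalProjectionOnto K e : V)
    rw [h1, h5, h2] at h6
    have h7 : ‖η‖ = 0 := by nlinarith [norm_nonneg η]
    have h8 : η = 0 := norm_eq_zero.mp h7
    rw [← hvη, h8, add_zero]
  -- e - Π_K e = u - Π_K u
  have hep : e - (Submodule.orthogonalProjectionOnto K e : V) = u - (Submodule.orthogonalProjectionOnto K u : V) := by
    have h1 : ((Submodule.orthogonalProjectionOnto K ustar : K) : V) = ustar :=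
      Submodule.starProjection_eq_self_iff.2 hustarK
    have h2 : (Submodule.orthogonalProjectionOnto K e : V) = (Submodule.orthogonalProjectionOnto K u : V) - ustar := by
      rw [he, map_sub, Submodule.coe_sub, h1]
    rw [he, h2]; abel
  -- Pythagoras over K
  have hG : ‖e‖^2 = ‖v‖^2 + ‖u - (Submodule.orthogonalProjectionOnto K u : V)‖^2 := by
    have h1 := pyth' K e
    rw [hep, heKv] at h1
    exact h1
  -- ⟪e, v⟫ = ‖v‖²
  have hH : ⟪e, v⟫_ℝ = ‖v‖^2 := by
    have h1 : ⟪v, e - (Submodule.orthogonalProjectionOnto K e : V)⟫_ℝ = 0 :=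
      Submodule.inner_right_of_mem_orthogonal (Submodule.mem_sup_left hv) heK
    rw [heKv] at h1
    have h2 := inner_sub_right (𝕜 := ℝ) v e v
    rw [h1, real_inner_self_eq_norm_sq] at h2
    rw [real_inner_comm]; linarith
  -- ‖v‖² ≤ ‖e‖ ‖v - Π_W v‖
  have hI : ‖v‖^2 ≤ ‖e‖ * ‖v - (Submodule.orthogonalProjectionOnto W v : V)‖ := by
    have h1 : ⟪e, (Submodule.orthogonalProjectionOnto W v : V)⟫_ℝ = 0 := by
      rw [real_inner_comm]
      exact Submodule.inner_right_of_mem_orthogonal (SetLike.coe_mem _) heW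
    have h2 := inner_sub_right (𝕜 := ℝ) e v (Submodule.orthogonalProjectionOnto W v : V)
    rw [h1, hH, sub_zero] at h2
    calc ‖v‖^2 = ⟪e, v - (Submodule.orthogonalProjectionOnto W v : V)⟫_ℝ := h2.symm
      _ ≤ ‖e‖ * ‖v - (Submodule.orthogonalProjectionOnto W v : V)‖ := real_inner_le_norm _ _
  have hsetBdd : BddBelow {r : ℝ | ∃ v ∈ Vn, v ≠ 0 ∧
      r = ‖(Submodule.orthogonalProjectionOnto W v : V)‖ / ‖v‖} :=
    ⟨0, fun r hr => by obtain ⟨x, -, -, rfl⟩ := hr; positivity⟩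
  -- β ‖v‖ ≤ ‖Π_W v‖
  have hKβ : β * ‖v‖ ≤ ‖(Submodule.orthogonalProjectionOnto W v : V)‖ := by
    by_cases hv0 : v = 0
    · simp [hv0]
    · have hmem : ‖(Submodule.orthogonalProjectionOnto W v : V)‖ / ‖v‖ ∈ {r : ℝ | ∃ v ∈ Vn, v ≠ 0 ∧
          r = ‖(Submodule.orthogonalProjectionOnto W v : V)‖ / ‖v‖} := ⟨v, hv, hv0, rfl⟩
      have h1 : β ≤ ‖(Submodule.orthogonalProjectionOnto W v : V)‖ / ‖v‖ := hβ ▸ csInf_le hsetBdd hmem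
      have hvpos : (0:ℝ) < ‖v‖ := norm_pos_iff.2 hv0
      calc β * ‖v‖ ≤ (‖(Submodule.orthogonalProjectionOnto W v : V)‖ / ‖v‖) * ‖v‖ :=
            mul_le_mul_of_nonneg_right h1 hvpos.le
        _ = ‖(Submodule.orthogonalProjectionOnto W v : V)‖ := div_mul_cancel₀ _ hvpos.ne'
  -- β ≤ 1
  have hβ1 : β ≤ 1 := by
    by_cases hbot : Vn = ⊥
    · exfalso
      have hemp : {r : ℝ | ∃ v ∈ Vn, v ≠ 0 ∧
          r = ‖(Submodule.orthogonalProjectionOnto W v : V)‖ / ‖v‖} = ∅ := by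
        ext r
        simp only [Set.mem_setOf_eq, Set.mem_empty_iff_false, iff_false]
        rintro ⟨x, hx, hx0, -⟩
        exact hx0 (by simpa [hbot] using hx)
      rw [hβ, hemp, Real.sInf_empty] at hβpos
      exact lt_irrefl 0 hβpos
    · obtain ⟨v0, hv0m, hv00⟩ := (Submodule.ne_bot_iff Vn).1 hbot
      have h1 : β ≤ ‖(Submodule.orthogonalProjectionOnto W v0 : V)‖ / ‖v0‖ :=
        hβ ▸ csInf_le hsetBdd ⟨v0, hv0m, hv00, rfl⟩
      have h2 : (0:ℝ) < ‖v0‖ := norm_pos_iff.2 hv00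
      exact h1.trans ((div_le_one h2).2 (proj_norm_le' W v0))
  -- final algebra
  have hpyW := pyth' W v
  have hfin : (β * ‖e‖)^2 ≤ ‖u - (Submodule.orthogonalProjectionOnto K u : V)‖^2 := by
    by_cases hN : ‖v‖ = 0
    · have hN2 : ‖v‖^2 = 0 := by rw [hN]; ring
      have hb2 : β^2 ≤ 1 := by nlinarith [hβ1, hβpos.le]
      nlinarith [hG, hN2, hb2, sq_nonneg ‖e‖]
    · have hNpos : (0:ℝ) < ‖v‖ := lt_of_le_of_ne (norm_nonneg _) (Ne.symm hN)
      have hq2 : (β * ‖v‖)^2 ≤ ‖(Submodule.orthogonalProjectionOnto W v : V)‖^2 :=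
        pow_le_pow_left₀ (mul_nonneg hβpos.le (norm_nonneg v)) hKβ 2
      have hr2 : ‖v - (Submodule.orthogonalProjectionOnto W v : V)‖^2 ≤ (1 - β^2) * ‖v‖^2 := by
        nlinarith [hpyW, hq2]
      have hEr : ‖v‖^2 * ‖v‖^2 ≤ (‖e‖ * ‖v - (Submodule.orthogonalProjectionOnto W v : V)‖) *
          (‖e‖ * ‖v - (Submodule.orthogonalProjectionOnto W v : V)‖) :=
        mul_self_le_mul_self (sq_nonneg _) hI
      have hstep : ‖v‖^2 * ‖v‖^2 ≤ ‖e‖^2 * ((1 - β^2) * ‖v‖^2) := by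
        nlinarith [hEr, hr2, sq_nonneg ‖e‖]
      have h6 : ‖v‖^2 ≤ (1 - β^2) * ‖e‖^2 := by
        nlinarith [hstep, mul_pos hNpos hNpos]
      nlinarith [hG, h6]
  have hfin2 : β * ‖e‖ ≤ ‖u - (Submodule.orthogonalProjectionOnto K u : V)‖ :=
    sq_le_imp' (norm_nonneg _) hfin (mul_nonneg hβpos.le (norm_nonneg _))
  calc ‖e‖ = β⁻¹ * (β * ‖e‖) := by field_simp
    _ ≤ β⁻¹ * ‖u - (Submodule.orthogonalProjectionOnto K u : V)‖ :=
      mul_le_mul_of_nonneg_left hfin2 (inv_nonneg.2 hβpos.le)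
end

section
/- If the solution manifold M ⊂ V satisfies ε(V_n) := sup_{u ∈ M} ‖u − Π_{V_n} u‖ < ∞ and β(V_n, W) > 0, then for every u ∈ M the PBDW reconstruction A(w) from w = Π_W u satisfies ‖u − A(w)‖ ≤ β(V_n, W)^{-1} ε(V_n). -/
open InnerProductSpace

private lemma pbdw_aux_sq_le {a b : ℝ} (h : a ^ 2 ≤ b ^ 2) (ha : 0 ≤ a) (hb : 0 ≤ b) :
    a ≤ b := by
  have h1 := Real.sqrt_le_sqrt h
  rwa [Real.sqrt_sq ha, Real.sqrt_sq hb] at h1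

private lemma pbdw_aux_pyth {V : Type*} [NormedAddCommGroup V] [InnerProductSpace ℝ V]
    [FiniteDimensional ℝ V] (K : Submodule ℝ V) (x : V) :
    ‖x‖ ^ 2 = ‖(Submodule.orthogonalProjectionOnto K x : V)‖ ^ 2 + ‖(Submodule.orthogonalProjectionOnto Kᗮ x : V)‖ ^ 2 := by
  have h := Submodule.norm_sq_eq_add_norm_sq_projection x K
  simpa only [Submodule.coe_norm] using h

set_option maxHeartbeats 1000000 in
/-- If the solution manifold `M` is approximated by `Vₙ` up to `ε(Vₙ) = sup_{u∈M} ‖u − Π_{Vₙ}u‖`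
and `β(Vₙ, W) > 0`, then the PBDW reconstruction satisfies
`‖u − A(w)‖ ≤ β(Vₙ, W)⁻¹ ε(Vₙ)` for every `u ∈ M`. -/
theorem pbdw_manifold_error_bound
    {V : Type*} [NormedAddCommGroup V] [InnerProductSpace ℝ V] [FiniteDimensional ℝ V]
    {m n : ℕ} (w : Fin m → V) (hw : Orthonormal ℝ w)
    (W : Submodule ℝ V) (hW : W = Submodule.span ℝ (Set.range w))
    (Vn : Submodule ℝ V) (hVn : Module.finrank ℝ Vn = n) (hnm : n ≤ m)
    (β : ℝ)
    (hβ : β = sInf {r : ℝ | ∃ v ∈ Vn, v ≠ 0 ∧ r = ‖(Submodule.orthogonalProjectionOnto W v : V)‖ / ‖v‖})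
    (hβpos : 0 < β)
    (M : Set V)
    (hbdd : BddAbove ((fun u => ‖u - (Submodule.orthogonalProjectionOnto Vn u : V)‖) '' M))
    (ε : ℝ)
    (hε : ε = sSup ((fun u => ‖u - (Submodule.orthogonalProjectionOnto Vn u : V)‖) '' M))
    (u : V) (hu : u ∈ M) (l : Fin m → ℝ) (hl : ∀ i, l i = ⟪w i, u⟫_ℝ)
    (ustar : V)
    (hconstr : ∀ i, ⟪w i, ustar⟫_ℝ = l i)
    (hmin : ∀ u' : V, (∀ i, ⟪w i, u'⟫_ℝ = l i) →
      ‖(Submodule.orthogonalProjectionOnto Vnᗮ ustar : V)‖ ^ 2 ≤ ‖(Submodule.orthogonalProjectionOnto Vnᗮ u' : V)‖ ^ 2) :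
    ‖u - ustar‖ ≤ β⁻¹ * ε := by
  have hε0 : ‖u - (Submodule.orthogonalProjectionOnto Vn u : V)‖ ≤ ε := by
    rw [hε]; exact le_csSup hbdd ⟨u, hu, rfl⟩
  have hεnn : (0 : ℝ) ≤ ε := le_trans (norm_nonneg _) hε0
  set e := u - ustar with he_def
  -- `e` is orthogonal to every observation vector
  have hwi : ∀ i, ⟪w i, e⟫_ℝ = 0 := by
    intro i
    rw [he_def, inner_sub_right, hconstr i, hl i, sub_self]
  have heW : e ∈ Wᗮ := by
    rw [hW, Submodule.mem_orthogonal]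
    intro y hy
    induction hy using Submodule.span_induction with
    | mem x hx => obtain ⟨i, rfl⟩ := hx; exact hwi i
    | zero => simp
    | add x y _ _ hx hy => rw [inner_add_left, hx, hy, add_zero]
    | smul c x _ hx => rw [real_inner_smul_left, hx, mul_zero]
  set pu : V := (Submodule.orthogonalProjectionOnto Vnᗮ u : V) with hpu_def
  set ps : V := (Submodule.orthogonalProjectionOnto Vnᗮ ustar : V) with hps_def
  set pe : V := (Submodule.orthogonalProjectionOnto Vnᗮ e : V) with hpe_def
  have hproj_sub : pe = pu - ps := by
    rw [hpe_def, he_def, map_sub]; rfl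
  -- the projection of `u` on `Vnᗮ` is `u - Π_{Vn} u`
  have hpu_eq : pu = u - (Submodule.orthogonalProjectionOnto Vn u : V) := by
    have : (Submodule.orthogonalProjectionOnto Vn u : V) + (Submodule.orthogonalProjectionOnto Vnᗮ u : V) = u :=
      Vn.starProjection_add_starProjection_orthogonal u
    rw [hpu_def]; linear_combination (norm := abel) this
  have hpu_le : ‖pu‖ ≤ ε := by rw [hpu_eq]; exact hε0
  -- first-order optimality: ⟪ps, pe⟫ = 0
  have hc : ⟪ps, pe⟫_ℝ = 0 := by
    by_cases hb0 : pe = 0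
    · rw [hb0, inner_zero_right]
    · have hbpos : (0 : ℝ) < ‖pe‖ := norm_pos_iff.mpr hb0
      set c := ⟪ps, pe⟫_ℝ with hcdef
      set t : ℝ := -c / ‖pe‖ ^ 2 with ht_def
      have hconstr' : ∀ i, ⟪w i, ustar + t • e⟫_ℝ = l i := by
        intro i
        rw [inner_add_right, real_inner_smul_right, hwi i, mul_zero, add_zero, hconstr i]
      have hm := hmin _ hconstr'
      have hexp : (Submodule.orthogonalProjectionOnto Vnᗮ (ustar + t • e) : V) = ps + t • pe := by
        rw [map_add, map_smul]; rfl
      rw [hexp, norm_add_sq_real, norm_smul, real_inner_smul_right] at hm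
      have hms : 0 ≤ 2 * (t * c) + (‖t‖ * ‖pe‖) ^ 2 := by linarith
      have hnt : (‖t‖ * ‖pe‖) ^ 2 = t ^ 2 * ‖pe‖ ^ 2 := by
        rw [mul_pow, Real.norm_eq_abs, sq_abs]
      rw [hnt] at hms
      have ht2 : t * ‖pe‖ ^ 2 = -c := by
        rw [ht_def, div_mul_cancel₀]; positivity
      have h4 : 0 ≤ (2 * (t * c) + t ^ 2 * ‖pe‖ ^ 2) * ‖pe‖ ^ 2 :=
        mul_nonneg hms (sq_nonneg _)
      have h5 : (2 * (t * c) + t ^ 2 * ‖pe‖ ^ 2) * ‖pe‖ ^ 2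
          = 2 * c * (t * ‖pe‖ ^ 2) + (t * ‖pe‖ ^ 2) ^ 2 := by ring
      rw [ht2] at h5
      have h6 : 0 ≤ -(c ^ 2) := by rw [h5] at h4; linarith [sq_nonneg c]; 
      have h7 : c ^ 2 = 0 := le_antisymm (by linarith) (sq_nonneg c)
      exact sq_eq_zero_iff.mp h7
  -- hence ‖pe‖ ≤ ε
  have hbε : ‖pe‖ ≤ ε := by
    have h1 : ‖pe‖ ^ 2 = ⟪pu, pe⟫_ℝ := by
      have h0 : ⟪pe, pe⟫_ℝ = ⟪pu - ps, pe⟫_ℝ := by rw [← hproj_sub]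
      rw [inner_sub_left, hc, sub_zero] at h0
      rw [← real_inner_self_eq_norm_sq, h0]
    have h2 : ⟪pu, pe⟫_ℝ ≤ ‖pu‖ * ‖pe‖ := real_inner_le_norm pu pe
    by_cases hb0 : ‖pe‖ = 0
    · rw [hb0]; exact hεnn
    · have hbpos : (0 : ℝ) < ‖pe‖ := lt_of_le_of_ne (norm_nonneg _) (Ne.symm hb0)
      have h3 : ‖pe‖ ^ 2 ≤ ε * ‖pe‖ :=
        le_trans (h1 ▸ h2) (mul_le_mul_of_nonneg_right hpu_le (norm_nonneg _))
      nlinarith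
  -- the inf-sup constant: basic facts about the defining set
  set S : Set ℝ := {r : ℝ | ∃ v ∈ Vn, v ≠ 0 ∧ r = ‖(Submodule.orthogonalProjectionOnto W v : V)‖ / ‖v‖}
    with hS_def
  have hSlb : ∀ r ∈ S, (0 : ℝ) ≤ r := by
    rintro r ⟨v, -, -, rfl⟩
    exact div_nonneg (norm_nonneg _) (norm_nonneg _)
  have hSbdd : BddBelow S := ⟨0, hSlb⟩
  have hSne : S.Nonempty := by
    by_contra h
    rw [Set.not_nonempty_iff_eq_empty] at h
    rw [h, Real.sInf_empty] at hβ
    rw [hβ] at hβpos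
    exact lt_irrefl 0 hβpos
  have hSle1 : ∀ r ∈ S, r ≤ 1 := by
    rintro r ⟨v, -, hv0, rfl⟩
    have hvpos : (0 : ℝ) < ‖v‖ := norm_pos_iff.mpr hv0
    rw [div_le_one hvpos]
    have hp := pbdw_aux_pyth W v
    have h1 : ‖(Submodule.orthogonalProjectionOnto W v : V)‖ ^ 2 ≤ ‖v‖ ^ 2 := by
      have := sq_nonneg ‖(Submodule.orthogonalProjectionOnto Wᗮ v : V)‖
      linarith
    exact pbdw_aux_sq_le h1 (norm_nonneg _) (norm_nonneg _)
  have hβ1 : β ≤ 1 := by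
    obtain ⟨r, hr⟩ := hSne
    exact le_trans (hβ ▸ csInf_le hSbdd hr) (hSle1 r hr)
  have hβsq : (0 : ℝ) ≤ 1 - β ^ 2 := by nlinarith
  -- the component of e in Vn
  set v : V := (Submodule.orthogonalProjectionOnto Vn e : V) with hv_def
  have hsplit : v + pe = e := Vn.starProjection_add_starProjection_orthogonal e
  have hpyth : ‖e‖ ^ 2 = ‖v‖ ^ 2 + ‖pe‖ ^ 2 := pbdw_aux_pyth Vn e
  -- key estimate: ‖v‖ ≤ √(1-β²) ‖e‖
  have ha : ‖v‖ ≤ Real.sqrt (1 - β ^ 2) * ‖e‖ := by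
    by_cases hv0 : v = 0
    · rw [hv0, norm_zero]
      exact mul_nonneg (Real.sqrt_nonneg _) (norm_nonneg _)
    · have hvpos : (0 : ℝ) < ‖v‖ := norm_pos_iff.mpr hv0
      have hvmem : v ∈ Vn := (Submodule.orthogonalProjectionOnto Vn e).2
      have hmemS : ‖(Submodule.orthogonalProjectionOnto W v : V)‖ / ‖v‖ ∈ S := ⟨v, hvmem, hv0, rfl⟩
      have hβv : β * ‖v‖ ≤ ‖(Submodule.orthogonalProjectionOnto W v : V)‖ := by
        have hle := hβ ▸ csInf_le hSbdd hmemS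
        calc β * ‖v‖ ≤ ‖(Submodule.orthogonalProjectionOnto W v : V)‖ / ‖v‖ * ‖v‖ :=
              mul_le_mul_of_nonneg_right hle (norm_nonneg _)
          _ = ‖(Submodule.orthogonalProjectionOnto W v : V)‖ := div_mul_cancel₀ _ (ne_of_gt hvpos)
      have hβv2 : (β * ‖v‖) ^ 2 ≤ ‖(Submodule.orthogonalProjectionOnto W v : V)‖ ^ 2 :=
        pow_le_pow_left₀ (mul_nonneg (le_of_lt hβpos) (norm_nonneg _)) hβv 2
      have hpythv := pbdw_aux_pyth W v
      have hPWperp : ‖(Submodule.orthogonalProjectionOnto Wᗮ v : V)‖ ^ 2 ≤ (1 - β ^ 2) * ‖v‖ ^ 2 := by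
        nlinarith [hβv2, hpythv]
      -- ⟪e, v⟫ = ‖v‖² and ⟪e, v⟫ = ⟪e, P_{W⊥} v⟫
      have hev : ⟪e, v⟫_ℝ = ‖v‖ ^ 2 := by
        have h0 : ⟪e, v⟫_ℝ = ⟪v + pe, v⟫_ℝ := by rw [hsplit]
        have hz : ⟪pe, v⟫_ℝ = 0 :=
          Submodule.inner_left_of_mem_orthogonal hvmem ((Submodule.orthogonalProjectionOnto Vnᗮ e).2)
        rw [h0, inner_add_left, real_inner_self_eq_norm_sq, hz, add_zero]
      have hev2 : ⟪e, v⟫_ℝ = ⟪e, (Submodule.orthogonalProjectionOnto Wᗮ v : V)⟫_ℝ := by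
        have hvW : v = (Submodule.orthogonalProjectionOnto W v : V) + (Submodule.orthogonalProjectionOnto Wᗮ v : V) :=
          (W.starProjection_add_starProjection_orthogonal v).symm
        have hz : ⟪e, (Submodule.orthogonalProjectionOnto W v : V)⟫_ℝ = 0 := by
          rw [real_inner_comm]
          exact (Submodule.mem_orthogonal W e).1 heW _ (Submodule.orthogonalProjectionOnto W v).2
        nth_rewrite 1 [hvW]
        rw [inner_add_right, hz, zero_add]
      have hcs : ⟪e, (Submodule.orthogonalProjectionOnto Wᗮ v : V)⟫_ℝ
          ≤ ‖e‖ * ‖(Submodule.orthogonalProjectionOnto Wᗮ v : V)‖ := real_inner_le_norm _ _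
      set s : ℝ := Real.sqrt (1 - β ^ 2) with hs_def
      have hs_nn : 0 ≤ s := Real.sqrt_nonneg _
      have hs_sq : s ^ 2 = 1 - β ^ 2 := Real.sq_sqrt hβsq
      have hPle : ‖(Submodule.orthogonalProjectionOnto Wᗮ v : V)‖ ≤ s * ‖v‖ := by
        refine pbdw_aux_sq_le ?_ (norm_nonneg _) (mul_nonneg hs_nn (norm_nonneg _))
        calc ‖(Submodule.orthogonalProjectionOnto Wᗮ v : V)‖ ^ 2 ≤ (1 - β ^ 2) * ‖v‖ ^ 2 := hPWperp
          _ = (s * ‖v‖) ^ 2 := by rw [mul_pow, hs_sq]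
      have hfin : ‖v‖ ^ 2 ≤ ‖e‖ * (s * ‖v‖) := by
        calc ‖v‖ ^ 2 = ⟪e, (Submodule.orthogonalProjectionOnto Wᗮ v : V)⟫_ℝ := by rw [← hev2, hev]
          _ ≤ ‖e‖ * ‖(Submodule.orthogonalProjectionOnto Wᗮ v : V)‖ := hcs
          _ ≤ ‖e‖ * (s * ‖v‖) := mul_le_mul_of_nonneg_left hPle (norm_nonneg _)
      have h8 : ‖v‖ * ‖v‖ ≤ (s * ‖e‖) * ‖v‖ := by
        calc ‖v‖ * ‖v‖ = ‖v‖ ^ 2 := (sq ‖v‖).symm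
          _ ≤ ‖e‖ * (s * ‖v‖) := hfin
          _ = (s * ‖e‖) * ‖v‖ := by ring
      exact le_of_mul_le_mul_right h8 hvpos
  -- combine: β ‖e‖ ≤ ‖pe‖
  have hkey : β * ‖e‖ ≤ ‖pe‖ := by
    have ha2 : ‖v‖ ^ 2 ≤ (1 - β ^ 2) * ‖e‖ ^ 2 := by
      calc ‖v‖ ^ 2 ≤ (Real.sqrt (1 - β ^ 2) * ‖e‖) ^ 2 :=
            pow_le_pow_left₀ (norm_nonneg _) ha 2
        _ = (1 - β ^ 2) * ‖e‖ ^ 2 := by rw [mul_pow, Real.sq_sqrt hβsq]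
    refine pbdw_aux_sq_le ?_ (mul_nonneg (le_of_lt hβpos) (norm_nonneg _)) (norm_nonneg _)
    nlinarith [ha2, hpyth]
  -- conclude
  rw [inv_mul_eq_div, le_div_iff₀ hβpos]
  calc ‖e‖ * β = β * ‖e‖ := mul_comm _ _
    _ ≤ ‖pe‖ := hkey
    _ ≤ ε := hbε
end
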